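/- arXiv:2501.08768 — 2 statements merged into one kernel-verified Lean document; each statement's English description precedes it below -/
import Mathlib

section
/- Fix $t > 0$, $q > 0$, $\alpha, \beta \in (0,1)$. Let $\bar{\lambda}, \bar{\mu}, B, \tilde{B} \in \mathbb{R}$ satisfy $\bar{\lambda}^2/4 + \lambda^2 B^2 = t^2/q$ and $\bar{\mu}^2/4 + \mu^2\tilde{B}^2 = \alpha\beta t^2/q$ for some reals $\lambda, \mu$. Define $D_\pm = \big(\frac{\bar{\lambda}}{2} - i\lambda B\big)\big(\frac{\bar{\mu}}{2} \pm i\mu\tilde{B}\big) - \frac{\alpha\beta}{q}t^2$. Then $|D_+ D_-|^2 = \frac{\alpha^2\beta^2}{q^3}t^6\Big((\bar{\lambda} - \bar{\mu})(\alpha\beta\bar{\lambda} - \bar{\mu}) + \frac{(\alpha\beta - 1)^2}{q}t^2\Big)$. -/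
/-- Explicit computation of the common denominator `|D₊D₋|²` in the limiting rescaled
mean squared overlap formulas, in the Marchenko–Pastur case. -/
theorem stmt10 (t q α β : ℝ) (ht : 0 < t) (hq : 0 < q)
    (hα : α ∈ Set.Ioo (0 : ℝ) 1) (hβ : β ∈ Set.Ioo (0 : ℝ) 1)
    (lamb mub lam mu B Bt : ℝ)
    (h1 : lamb ^ 2 / 4 + lam ^ 2 * B ^ 2 = t ^ 2 / q)
    (h2 : mub ^ 2 / 4 + mu ^ 2 * Bt ^ 2 = α * β * t ^ 2 / q)
    (Dp Dm : ℂ)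
    (hDp : Dp = ((lamb : ℂ) / 2 - Complex.I * (lam : ℂ) * (B : ℂ)) *
        ((mub : ℂ) / 2 + Complex.I * (mu : ℂ) * (Bt : ℂ)) - ((α * β / q * t ^ 2 : ℝ) : ℂ))
    (hDm : Dm = ((lamb : ℂ) / 2 - Complex.I * (lam : ℂ) * (B : ℂ)) *
        ((mub : ℂ) / 2 - Complex.I * (mu : ℂ) * (Bt : ℂ)) - ((α * β / q * t ^ 2 : ℝ) : ℂ)) :
    (‖Dp * Dm‖) ^ 2 =
      α ^ 2 * β ^ 2 / q ^ 3 * t ^ 6 *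
        ((lamb - mub) * (α * β * lamb - mub) + (α * β - 1) ^ 2 / q * t ^ 2) := by
  have hq' : q ≠ 0 := ne_of_gt hq
  have hp : Complex.normSq Dp =
      (lamb/2*(mub/2) + lam*B*(mu*Bt) - α * β / q * t ^ 2)^2
        + (lamb/2*(mu*Bt) - lam*B*(mub/2))^2 := by
    subst hDp
    simp [Complex.normSq_apply, Complex.mul_re, Complex.mul_im, Complex.div_re,
      Complex.div_im, ← Complex.ofReal_pow]
    field_simp
    ring
  have hm : Complex.normSq Dm =
      (lamb/2*(mub/2) - lam*B*(mu*Bt) - α * β / q * t ^ 2)^2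
        + (lamb/2*(mu*Bt) + lam*B*(mub/2))^2 := by
    subst hDm
    simp [Complex.normSq_apply, Complex.mul_re, Complex.mul_im, Complex.div_re,
      Complex.div_im, ← Complex.ofReal_pow]
    field_simp
    ring
  rw [Complex.sq_norm, Complex.normSq_mul, hp, hm]
  set S : ℝ := t^2/q with hS
  set k : ℝ := α*β*t^2/q with hk
  have e1 : lamb ^ 2 / 4 + lam ^ 2 * B ^ 2 - S = 0 := by rw [hS]; linarith
  have e2 : mub ^ 2 / 4 + mu ^ 2 * Bt ^ 2 - k = 0 := by rw [hk]; linarith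
  set a : ℝ := lamb/2
  set c : ℝ := mub/2
  set X : ℝ := S*k + k^2 - 2*k*a*c with hX
  have hαβ : α * β / q * t ^ 2 = k := by rw [hk]; ring
  have hrhs : α ^ 2 * β ^ 2 / q ^ 3 * t ^ 6 *
        ((lamb - mub) * (α * β * lamb - mub) + (α * β - 1) ^ 2 / q * t ^ 2)
      = X^2 - 4*k^2*(S - a^2)*(k - c^2) := by
    rw [hX, hk, hS]
    field_simp
    ring
  rw [hαβ, hrhs]
  set E1 : ℝ := lamb ^ 2 / 4 + lam ^ 2 * B ^ 2 - S with hE1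
  set E2 : ℝ := mub ^ 2 / 4 + mu ^ 2 * Bt ^ 2 - k with hE2
  set E : ℝ := E1*k + E2*S + E1*E2 with hE
  linear_combination (2*X*k + 2*X*E2 + k*E - 4*k^2*(k - c^2) - 4*k^2*E2) * e1 +
    (2*X*S + S*E + E1*E - 4*k^2*(S - a^2)) * e2
end

section
/- Let $a, f_0 \in \mathbb{R}$ (or $\mathbb{C}$) and define $f(s) = \frac{f_0 + (a - f_0^2)s}{1 - 2f_0 s - (a - f_0^2)s^2}$ and $F(s) = -\frac{1}{2}\log\big(1 - 2f_0 s - (a - f_0^2)s^2\big)$ on an interval around $0$ where $1 - 2f_0 s - (a - f_0^2)s^2 > 0$ (resp. nonvanishing). Then $F' = f$, $f(0) = f_0$, $F(0) = 0$, and $f$ solves the integro-differential equation $f'(s) = f(s)^2 + a\,e^{4F(s)}$. -/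
/-- Explicit solution of the Riccati-type equation for the characteristic flow of `S_W`:
with `f(s) = (f₀ + (a - f₀²)s)/(1 - 2f₀s - (a - f₀²)s²)` and
`F(s) = -(1/2) log(1 - 2f₀s - (a - f₀²)s²)` on an interval around `0` where the
denominator is positive, one has `F' = f`, `f(0) = f₀`, `F(0) = 0`, and
`f'(s) = f(s)² + a e^{4F(s)}`. -/
theorem stmt11 (a f0 : ℝ) (I : Set ℝ) (hI : IsOpen I) (h0 : (0 : ℝ) ∈ I)
    (hpos : ∀ s ∈ I, 0 < 1 - 2 * f0 * s - (a - f0 ^ 2) * s ^ 2)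
    (f F : ℝ → ℝ)
    (hf : ∀ s, f s = (f0 + (a - f0 ^ 2) * s) / (1 - 2 * f0 * s - (a - f0 ^ 2) * s ^ 2))
    (hF : ∀ s, F s = -(1 / 2) * Real.log (1 - 2 * f0 * s - (a - f0 ^ 2) * s ^ 2)) :
    f 0 = f0 ∧ F 0 = 0 ∧
    (∀ s ∈ I, HasDerivAt F (f s) s) ∧
    (∀ s ∈ I, HasDerivAt f ((f s) ^ 2 + a * Real.exp (4 * F s)) s) := by
  have hfe : f = fun s => (f0 + (a - f0 ^ 2) * s) / (1 - 2 * f0 * s - (a - f0 ^ 2) * s ^ 2) :=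
    funext hf
  have hFe : F = fun s => -(1 / 2) * Real.log (1 - 2 * f0 * s - (a - f0 ^ 2) * s ^ 2) :=
    funext hF
  subst hfe hFe
  have hD : ∀ s : ℝ,
      HasDerivAt (fun s : ℝ => 1 - 2 * f0 * s - (a - f0 ^ 2) * s ^ 2)
        (-(2 * f0) - (a - f0 ^ 2) * (2 * s)) s := by
    intro s
    have h1 : HasDerivAt (fun s : ℝ => 1 - 2 * f0 * s) (-(2 * f0)) s := by
      simpa using ((hasDerivAt_id s).const_mul (2 * f0)).const_sub 1
    have h2 : HasDerivAt (fun s : ℝ => (a - f0 ^ 2) * s ^ 2) ((a - f0 ^ 2) * (2 * s)) s := by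
      simpa using (hasDerivAt_pow 2 s).const_mul (a - f0 ^ 2)
    exact h1.sub h2
  refine ⟨by norm_num, by norm_num, ?_, ?_⟩
  · intro s hs
    have hDpos := hpos s hs
    have hne : (1 - 2 * f0 * s - (a - f0 ^ 2) * s ^ 2) ≠ 0 := ne_of_gt hDpos
    have := ((hD s).log hne).const_mul (-(1 / 2 : ℝ))
    refine this.congr_deriv ?_
    field_simp
    ring
  · intro s hs
    have hDpos := hpos s hs
    have hne : (1 - 2 * f0 * s - (a - f0 ^ 2) * s ^ 2) ≠ 0 := ne_of_gt hDpos
    have hN : HasDerivAt (fun s : ℝ => f0 + (a - f0 ^ 2) * s) (a - f0 ^ 2) s := by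
      simpa using ((hasDerivAt_id s).const_mul (a - f0 ^ 2)).const_add f0
    have hdiv := hN.div (hD s) hne
    refine hdiv.congr_deriv ?_
    have hexp : Real.exp (4 * (-(1 / 2) * Real.log (1 - 2 * f0 * s - (a - f0 ^ 2) * s ^ 2)))
        = ((1 - 2 * f0 * s - (a - f0 ^ 2) * s ^ 2) ^ 2)⁻¹ := by
      rw [show (4 : ℝ) * (-(1 / 2) * Real.log (1 - 2 * f0 * s - (a - f0 ^ 2) * s ^ 2))
          = -Real.log ((1 - 2 * f0 * s - (a - f0 ^ 2) * s ^ 2) ^ 2) by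
        rw [Real.log_pow]; push_cast; ring]
      rw [Real.exp_neg, Real.exp_log (by positivity)]
    rw [hexp]
    field_simp
    ring
end
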